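/- Suppose (ρ, ρᵒ) is a renormalized weak solution of the transport problem ∂_t ρ + div(vρ) = 0 with initial data ρ₀ and inflow data ρ_b, where ρ₀ takes values in [ρ₁⁰, ρ₁¹] ∪ [ρ₂⁰, ρ₂¹] a.e. (with ρ₁⁰ ≤ ρ₁¹ < ρ₂⁰ ≤ ρ₂¹) and likewise ρ_b on Γ_T⁻, and suppose zero is the unique solution of the transport system with zero data. Then ρ(t,x) ∈ [ρ₁⁰, ρ₁¹] ∪ [ρ₂⁰, ρ₂¹] a.e. in Ω_T and ρᵒ ∈ [ρ₁⁰, ρ₁¹] ∪ [ρ₂⁰, ρ₂¹] a.e. on Γ_T⁺. -/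

import Mathlib

open MeasureTheory Set

private def gsq (x : ℝ) : ℝ := (max x 0) ^ 2

private lemma gsq_nonneg (x : ℝ) : 0 ≤ gsq x := sq_nonneg _

private lemma gsq_eq_zero_iff {x : ℝ} : gsq x = 0 ↔ x ≤ 0 := by
  rw [show gsq x = (max x 0) ^ 2 from rfl, pow_eq_zero_iff (by norm_num : (2:ℕ) ≠ 0)]
  exact max_eq_right_iff

private lemma gsq_hasDerivAt (x : ℝ) : HasDerivAt gsq (2 * max x 0) x := by
  rcases lt_trichotomy x 0 with hx | hx | hx
  · have h : gsq =ᶠ[nhds x] fun _ => 0 := by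
      filter_upwards [Iio_mem_nhds hx] with y hy
      simpa [gsq_eq_zero_iff] using le_of_lt hy
    rw [max_eq_right hx.le, mul_zero]
    exact (hasDerivAt_const x (0:ℝ)).congr_of_eventuallyEq h
  · subst hx
    rw [max_self, mul_zero, hasDerivAt_iff_isLittleO, Asymptotics.isLittleO_iff]
    intro c hc
    filter_upwards [Metric.ball_mem_nhds (0:ℝ) hc] with y hy
    have h2 : |y| < c := by simpa [Real.dist_eq] using hy
    have hgy : gsq y ≤ |y| * |y| := by
      unfold gsq
      rcases le_or_gt y 0 with h | h
      · rw [max_eq_right h]; nlinarith [abs_nonneg y]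
      · rw [max_eq_left h.le, sq, abs_of_pos h]
    have h0 : gsq 0 = 0 := by simp [gsq]
    simp only [h0, smul_zero, sub_zero, Real.norm_eq_abs]
    rw [abs_of_nonneg (gsq_nonneg y)]
    nlinarith [abs_nonneg y]
  · have h : gsq =ᶠ[nhds x] fun y => y ^ 2 := by
      filter_upwards [Ioi_mem_nhds hx] with y hy
      simp [gsq, max_eq_left (le_of_lt (mem_Ioi.mp hy))]
    rw [max_eq_left hx.le]
    have hp := hasDerivAt_pow 2 x
    norm_num at hp
    exact hp.congr_of_eventuallyEq h

private lemma gsq_contDiff : ContDiff ℝ 1 gsq := by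
  rw [contDiff_one_iff_deriv]
  refine ⟨fun x => (gsq_hasDerivAt x).differentiableAt, ?_⟩
  have : deriv gsq = fun x => 2 * max x 0 := funext fun x => (gsq_hasDerivAt x).deriv
  rw [this]
  exact continuous_const.mul (continuous_id.max continuous_const)

/-- Two-interval confinement for the transport equation via renormalization:
if ρ₀ and ρ_b take values a.e. in [ρ₁⁰,ρ₁¹] ∪ [ρ₂⁰,ρ₂¹] (with ρ₁¹ < ρ₂⁰), if
(ρ,ρᵒ) is a renormalized solution, and if zero is the unique solution of the
transport problem with zero data, then ρ ∈ [ρ₁⁰,ρ₁¹] ∪ [ρ₂⁰,ρ₂¹] a.e. in Ω_T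
and ρᵒ ∈ [ρ₁⁰,ρ₁¹] ∪ [ρ₂⁰,ρ₂¹] a.e. (for μ⁺) on Γ_T⁺. -/
theorem stmt_14
    {ΩT Ωsp ΓT : Type*} [MeasurableSpace ΩT] [MeasurableSpace Ωsp] [MeasurableSpace ΓT]
    (μT : Measure ΩT) (μΩ : Measure Ωsp) (μplus μminus : Measure ΓT)
    (Sol : (Ωsp → ℝ) → (ΓT → ℝ) → (ΩT → ℝ) × (ΓT → ℝ) → Prop)
    (ρ0 : Ωsp → ℝ) (ρb : ΓT → ℝ) (ρ : ΩT → ℝ) (ρo : ΓT → ℝ)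
    (ρ10 ρ11 ρ20 ρ21 : ℝ) (hord : ρ10 ≤ ρ11 ∧ ρ11 < ρ20 ∧ ρ20 ≤ ρ21)
    (h0 : ∀ᵐ x ∂μΩ, ρ0 x ∈ Icc ρ10 ρ11 ∪ Icc ρ20 ρ21)
    (hb : ∀ᵐ x ∂μminus, ρb x ∈ Icc ρ10 ρ11 ∪ Icc ρ20 ρ21)
    (hsol : Sol ρ0 ρb (ρ, ρo))
    -- the pair (ρ,ρᵒ) is a renormalized solution
    (hren : ∀ β : ℝ → ℝ, ContDiff ℝ 1 β →
      Sol (fun x => β (ρ0 x)) (fun x => β (ρb x)) (fun x => β (ρ x), fun x => β (ρo x)))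
    -- solutions depend only on the a.e. classes of the data
    (hcongr : ∀ d0 d0' db db' p, (d0 =ᵐ[μΩ] d0') → (db =ᵐ[μminus] db') →
      Sol d0 db p → Sol d0' db' p)
    -- zero is the unique solution of the problem with zero data
    (hzero : ∀ p, Sol (fun _ => 0) (fun _ => 0) p →
      (p.1 =ᵐ[μT] fun _ => 0) ∧ (p.2 =ᵐ[μplus] fun _ => 0)) :
    (∀ᵐ x ∂μT, ρ x ∈ Icc ρ10 ρ11 ∪ Icc ρ20 ρ21) ∧
      (∀ᵐ x ∂μplus, ρo x ∈ Icc ρ10 ρ11 ∪ Icc ρ20 ρ21) := by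
  set β : ℝ → ℝ := fun y =>
    (gsq (y - ρ11) + gsq (ρ10 - y)) * (gsq (y - ρ21) + gsq (ρ20 - y)) with hβdef
  have hβC : ContDiff ℝ 1 β := by
    have c1 : ContDiff ℝ 1 fun y : ℝ => gsq (y - ρ11) :=
      gsq_contDiff.comp (contDiff_id.sub contDiff_const)
    have c2 : ContDiff ℝ 1 fun y : ℝ => gsq (ρ10 - y) :=
      gsq_contDiff.comp (contDiff_const.sub contDiff_id)
    have c3 : ContDiff ℝ 1 fun y : ℝ => gsq (y - ρ21) :=
      gsq_contDiff.comp (contDiff_id.sub contDiff_const)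
    have c4 : ContDiff ℝ 1 fun y : ℝ => gsq (ρ20 - y) :=
      gsq_contDiff.comp (contDiff_const.sub contDiff_id)
    exact (c1.add c2).mul (c3.add c4)
  have hiff : ∀ y : ℝ, β y = 0 ↔ y ∈ Icc ρ10 ρ11 ∪ Icc ρ20 ρ21 := by
    intro y
    simp only [hβdef, mul_eq_zero,
      add_eq_zero_iff_of_nonneg (gsq_nonneg _) (gsq_nonneg _),
      gsq_eq_zero_iff, sub_nonpos, mem_union, mem_Icc]
    tauto
  have h0' : (fun x => β (ρ0 x)) =ᵐ[μΩ] fun _ => 0 :=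
    h0.mono fun x hx => (hiff _).2 hx
  have hb' : (fun x => β (ρb x)) =ᵐ[μminus] fun _ => 0 :=
    hb.mono fun x hx => (hiff _).2 hx
  have hs : Sol (fun _ => 0) (fun _ => 0) (fun x => β (ρ x), fun x => β (ρo x)) :=
    hcongr _ _ _ _ _ h0' hb' (hren β hβC)
  obtain ⟨hz1, hz2⟩ := hzero _ hs
  exact ⟨hz1.mono fun x hx => (hiff _).1 hx, hz2.mono fun x hx => (hiff _).1 hx⟩
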